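/- Let n ≥ 2, G = Sp(n+1), K = {diag(B,q) : B ∈ Sp(n), q ∈ Sp(1)} ⊆ G, and N = {diag(A,q₁,q₂) : A ∈ Sp(n−1), q₁,q₂ ∈ Sp(1)} ⊆ G. Consider the action of G × K × N on G × G given by (g,k,h)·(g₁,g₂) = (g g₁ k⁻¹, g g₂ h⁻¹). Then two pairs (g₁,g₂) and (h₁,h₂) in G × G lie in the same orbit of this action if and only if ‖v₀(g₂⁻¹g₁)‖ = ‖v₀(h₂⁻¹h₁)‖, |vₙ(g₂⁻¹g₁)| = |vₙ(h₂⁻¹h₁)|, and |vₙ₊₁(g₂⁻¹g₁)| = |vₙ₊₁(h₂⁻¹h₁)|. -/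

import Mathlib

open scoped Quaternion

noncomputable section

/-- `Sp m` is the group of `m × m` quaternionic matrices `g` with `g* g = 1`. -/
abbrev Sp (m : ℕ) : Type := ↥(unitary (Matrix (Fin m) (Fin m) ℍ[ℝ]))

/-- The subgroup `K = {diag(B, q) : B ∈ Sp(n), q ∈ Sp(1)}` of `Sp (n+1)`, described as the
set of unitary matrices whose off-diagonal blocks (mixing the first `n` indices with the
last index) vanish. -/
def Kset (n : ℕ) : Set (Sp (n + 1)) :=
  {x | ∀ i j : Fin (n + 1),
    (((i : ℕ) < n ∧ (j : ℕ) = n) ∨ ((i : ℕ) = n ∧ (j : ℕ) < n)) → x.val i j = 0}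

/-- The subgroup `N = {diag(A, q₁, q₂) : A ∈ Sp(n−1), q₁, q₂ ∈ Sp(1)}` of `Sp (n+1)`,
described as the set of unitary matrices vanishing outside the top-left `(n−1) × (n−1)`
block and the last two diagonal entries. -/
def Nset (n : ℕ) : Set (Sp (n + 1)) :=
  {x | ∀ i j : Fin (n + 1),
    ¬(((i : ℕ) < n - 1 ∧ (j : ℕ) < n - 1) ∨ (i = j ∧ n - 1 ≤ (i : ℕ))) → x.val i j = 0}

/-- `v g i` is the `i`-th entry of the last column of `g ∈ Sp (n+1)`. -/
def v {n : ℕ} (g : Sp (n + 1)) (i : Fin (n + 1)) : ℍ[ℝ] :=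
  g.val i (Fin.last n)

/-- The Euclidean norm of the vector `v₀(g) ∈ ℍ^{n-1}` of the first `n − 1` entries of the
last column of `g`. -/
def normV0 {n : ℕ} (g : Sp (n + 1)) : ℝ :=
  Real.sqrt (∑ i : Fin (n - 1), ‖v g (Fin.castLE (by omega) i)‖ ^ 2)


open Quaternion Matrix Finset

namespace SpAux

def reAM : ℍ[ℝ] →+ ℝ where
  toFun := QuaternionAlgebra.re
  map_zero' := rfl
  map_add' := fun _ _ => rfl

lemma re_sum {α : Type*} (s : Finset α) (f : α → ℍ[ℝ]) :
    (∑ i ∈ s, f i).re = ∑ i ∈ s, (f i).re := map_sum reAM f s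

lemma sum_castLE {M : Type*} [AddCommMonoid M] {m k : ℕ} (h : m ≤ k) (f : Fin k → M)
    (h0 : ∀ i : Fin k, m ≤ (i : ℕ) → f i = 0) :
    ∑ i, f i = ∑ i : Fin m, f (Fin.castLE h i) := by
  have hm : ∑ x ∈ Finset.univ.map ⟨Fin.castLE h, Fin.castLE_injective h⟩, f x
      = ∑ i : Fin m, f (Fin.castLE h i) := Finset.sum_map _ _ _
  rw [← hm]
  refine (Finset.sum_subset (Finset.subset_univ _) (fun x _ hx => h0 x ?_)).symm
  by_contra hc
  push_neg at hc
  exact hx (Finset.mem_map.2 ⟨⟨x, hc⟩, Finset.mem_univ _, by ext; rfl⟩)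

lemma entry_star_mul {m : ℕ} {u : Matrix (Fin m) (Fin m) ℍ[ℝ]} (hu : star u * u = 1)
    (j j' : Fin m) : ∑ i, star (u i j) * u i j' = if j = j' then 1 else 0 := by
  have h := congrFun (congrFun hu j) j'
  rw [Matrix.mul_apply] at h
  simpa [Matrix.star_apply, Matrix.one_apply] using h

lemma entry_mul_star {m : ℕ} {u : Matrix (Fin m) (Fin m) ℍ[ℝ]} (hu : u * star u = 1)
    (i i' : Fin m) : ∑ j, u i j * star (u i' j) = if i = i' then 1 else 0 := by
  have h := congrFun (congrFun hu i) i'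
  rw [Matrix.mul_apply] at h
  simpa [Matrix.star_apply, Matrix.one_apply] using h

lemma row_norm_sum {m : ℕ} {u : Matrix (Fin m) (Fin m) ℍ[ℝ]} (hu : u * star u = 1)
    (i : Fin m) : ∑ j, (‖u i j‖^2 : ℝ) = 1 := by
  have h := entry_mul_star hu i i
  simp only [if_pos rfl] at h
  have := congrArg QuaternionAlgebra.re h
  rw [re_sum] at this
  simpa [Quaternion.self_mul_star, sq, Quaternion.normSq_eq_norm_mul_self] using this

lemma col_norm_sum {m : ℕ} {u : Matrix (Fin m) (Fin m) ℍ[ℝ]} (hu : star u * u = 1)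
    (j : Fin m) : ∑ i, (‖u i j‖^2 : ℝ) = 1 := by
  have h := entry_star_mul hu j j
  simp only [if_pos rfl] at h
  have := congrArg QuaternionAlgebra.re h
  rw [re_sum] at this
  simpa [Quaternion.star_mul_self, sq, Quaternion.normSq_eq_norm_mul_self] using this

lemma row_entries_zero {m : ℕ} {u : Matrix (Fin m) (Fin m) ℍ[ℝ]} (hu : u * star u = 1)
    (i i0 : Fin m) (h1 : ‖u i i0‖ = 1) : ∀ j, j ≠ i0 → u i j = 0 := by
  have h2 := row_norm_sum hu i
  rw [← Finset.add_sum_erase _ _ (Finset.mem_univ i0)] at h2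
  have h3 : ∑ j ∈ Finset.univ.erase i0, (‖u i j‖^2 : ℝ) = 0 := by
    rw [h1] at h2; linarith
  intro j hj
  have := (Finset.sum_eq_zero_iff_of_nonneg (fun x _ => sq_nonneg _)).1 h3 j
    (Finset.mem_erase.2 ⟨hj, Finset.mem_univ _⟩)
  have : ‖u i j‖ = 0 := by nlinarith [norm_nonneg (u i j)]
  simpa using this

lemma col_norm_one_of_single {m : ℕ} {u : Matrix (Fin m) (Fin m) ℍ[ℝ]} (hu : star u * u = 1)
    (j i0 : Fin m) (h0 : ∀ i, i ≠ i0 → u i j = 0) : ‖u i0 j‖ = 1 := by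
  have h2 := col_norm_sum hu j
  rw [Finset.sum_eq_single i0 (fun b _ hb => by rw [h0 b hb]; simp) (by simp)] at h2
  nlinarith [norm_nonneg (u i0 j)]



def hh {m : ℕ} (p : Fin m → ℍ[ℝ]) : Matrix (Fin m) (Fin m) ℍ[ℝ] :=
  Matrix.of fun i j => (if i = j then (1:ℍ[ℝ]) else 0) - (2:ℝ) • (p i * star (p j))

lemma aux_expand (r : ℝ) (a b c d : ℍ[ℝ]) :
    (a - r • b) * (c - r • d) = a * c - r • (a * d) - r • (b * c) + (r * r) • (b * d) := by
  rw [sub_mul, mul_sub, mul_sub, smul_mul_assoc, mul_smul_comm, mul_smul_comm,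
    smul_mul_assoc, smul_smul]
  abel

lemma hh_star {m : ℕ} (p : Fin m → ℍ[ℝ]) : star (hh p) = hh p := by
  rw [← Matrix.ext_iff]
  intro i j
  rw [Matrix.star_apply]
  show star ((if j = i then (1:ℍ[ℝ]) else 0) - (2:ℝ) • (p j * star (p i))) = _
  rw [star_sub, Quaternion.star_smul, StarMul.star_mul, star_star, apply_ite star,
    star_one, star_zero]
  show (if j = i then (1:ℍ[ℝ]) else 0) - _ = (if i = j then (1:ℍ[ℝ]) else 0) - _
  rw [show ((if j = i then (1:ℍ[ℝ]) else 0) = if i = j then (1:ℍ[ℝ]) else 0) by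
    simp [eq_comm]]

lemma hh_mul_self {m : ℕ} (p : Fin m → ℍ[ℝ]) (hp : ∑ i, star (p i) * p i = 1) :
    hh p * hh p = 1 := by
  rw [← Matrix.ext_iff]
  intro i j
  rw [Matrix.mul_apply, Matrix.one_apply]
  simp only [hh, Matrix.of_apply]
  have expand : ∀ k : Fin m,
      ((if i = k then (1:ℍ[ℝ]) else 0) - (2:ℝ) • (p i * star (p k))) *
      ((if k = j then (1:ℍ[ℝ]) else 0) - (2:ℝ) • (p k * star (p j)))
      = ((if i = k then (1:ℍ[ℝ]) else 0) * (if k = j then (1:ℍ[ℝ]) else 0)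
        - (2:ℝ) • ((if i = k then (1:ℍ[ℝ]) else 0) * (p k * star (p j)))
        - (2:ℝ) • ((p i * star (p k)) * (if k = j then (1:ℍ[ℝ]) else 0)))
        + ((2:ℝ) * 2) • ((p i * star (p k)) * (p k * star (p j))) :=
    fun k => aux_expand 2 _ _ _ _
  rw [Finset.sum_congr rfl (fun k _ => expand k), Finset.sum_add_distrib,
    Finset.sum_sub_distrib, Finset.sum_sub_distrib]
  have s1 : ∑ k : Fin m, (if i = k then (1:ℍ[ℝ]) else 0) * (if k = j then (1:ℍ[ℝ]) else 0)
      = if i = j then (1:ℍ[ℝ]) else 0 := by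
    simp [ite_mul, Finset.sum_ite_eq]
  have s2 : ∑ k : Fin m, (2:ℝ) • ((if i = k then (1:ℍ[ℝ]) else 0) * (p k * star (p j)))
      = (2:ℝ) • (p i * star (p j)) := by
    rw [← Finset.smul_sum]
    congr 1
    simp [ite_mul, Finset.sum_ite_eq]
  have s3 : ∑ k : Fin m, (2:ℝ) • ((p i * star (p k)) * (if k = j then (1:ℍ[ℝ]) else 0))
      = (2:ℝ) • (p i * star (p j)) := by
    rw [← Finset.smul_sum]
    congr 1
    simp [mul_ite, Finset.sum_ite_eq']
  have s4 : ∑ k : Fin m, ((2:ℝ) * 2) • ((p i * star (p k)) * (p k * star (p j)))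
      = (4:ℝ) • (p i * star (p j)) := by
    rw [← Finset.smul_sum]
    have : ∀ k : Fin m, (p i * star (p k)) * (p k * star (p j))
        = p i * ((star (p k) * p k) * star (p j)) := by
      intro k; rw [mul_assoc, mul_assoc]
    rw [Finset.sum_congr rfl (fun k _ => this k), ← Finset.mul_sum, ← Finset.sum_mul, hp,
      one_mul]
    norm_num
  rw [s1, s2, s3, s4]
  have h4 : ((2:ℝ) • (p i * star (p j)) + (2:ℝ) • (p i * star (p j)))
      = (4:ℝ) • (p i * star (p j)) := by
    rw [← add_smul]; norm_num
  rw [sub_sub, h4]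
  abel

lemma hh_mulVec {m : ℕ} (p u : Fin m → ℍ[ℝ]) :
    (hh p).mulVec u = fun i => u i - (2:ℝ) • (p i * ∑ j, star (p j) * u j) := by
  funext i
  simp only [Matrix.mulVec, dotProduct, hh, Matrix.of_apply, sub_mul,
    smul_mul_assoc]
  rw [Finset.sum_sub_distrib]
  congr 1
  · simp [ite_mul, Finset.sum_ite_eq]
  · rw [← Finset.smul_sum]
    congr 1
    rw [Finset.mul_sum]
    exact Finset.sum_congr rfl fun x _ => mul_assoc _ _ _



def coeAM : ℝ →+ ℍ[ℝ] where
  toFun := fun r => (r : ℍ[ℝ])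
  map_zero' := by norm_cast
  map_add' := fun a b => by push_cast; ring

lemma coe_sum {α : Type*} (s : Finset α) (f : α → ℝ) :
    ((∑ i ∈ s, f i : ℝ) : ℍ[ℝ]) = ∑ i ∈ s, ((f i : ℝ) : ℍ[ℝ]) := map_sum coeAM f s

lemma star_mul_self_q (a : ℍ[ℝ]) : star a * a = ((‖a‖^2 : ℝ) : ℍ[ℝ]) := by
  rw [Quaternion.star_mul_self, sq, Quaternion.normSq_eq_norm_mul_self]

lemma self_mul_star_q (a : ℍ[ℝ]) : a * star a = ((‖a‖^2 : ℝ) : ℍ[ℝ]) := by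
  rw [Quaternion.self_mul_star, sq, Quaternion.normSq_eq_norm_mul_self]

lemma norm_coe_q (x : ℝ) (hx : 0 ≤ x) : ‖((x:ℝ) : ℍ[ℝ])‖ = x := by
  rw [Quaternion.norm_coe, Real.norm_eq_abs, abs_of_nonneg hx]

-- dummy hh defs to be appended later; for testing import the hh file content is assumed present

set_option maxHeartbeats 1000000 in
lemma exists_unitary_mulVec_single {m : ℕ} (hm : 0 < m) (w : Fin m → ℍ[ℝ]) :
    ∃ A ∈ unitary (Matrix (Fin m) (Fin m) ℍ[ℝ]),
      A.mulVec w = fun i => if i = (⟨0, hm⟩ : Fin m) then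
        ((Real.sqrt (∑ j, ‖w j‖^2) : ℝ) : ℍ[ℝ]) else 0 := by
  classical
  set i0 : Fin m := ⟨0, hm⟩
  set S : ℝ := ∑ j, ‖w j‖^2 with hSdef
  have hS0 : 0 ≤ S := Finset.sum_nonneg fun i _ => sq_nonneg _
  set r : ℝ := Real.sqrt S with hrdef
  have hr0 : 0 ≤ r := Real.sqrt_nonneg _
  have hr2 : r^2 = S := Real.sq_sqrt hS0
  by_cases hw : w = 0
  · refine ⟨1, Submonoid.one_mem _, ?_⟩
    have hrz : r = 0 := by
      rw [hrdef, hSdef, hw]; simp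
    rw [Matrix.one_mulVec, hw]
    funext i
    rw [hrz]
    simp
  -- diagonal step
  set a : ℍ[ℝ] := w i0 with hadef
  set t : ℝ := ‖a‖ with htdef
  have ht0 : 0 ≤ t := norm_nonneg _
  set θ : ℍ[ℝ] := if a = 0 then 1 else (‖a‖⁻¹ : ℝ) • star a with hθdef
  have hθ1 : star θ * θ = 1 := by
    by_cases h : a = 0
    · simp [hθdef, h]
    · rw [hθdef, if_neg h, Quaternion.star_smul, star_star, smul_mul_assoc, mul_smul_comm,
        smul_smul, self_mul_star_q, Quaternion.smul_coe]
      have : ‖a‖ ≠ 0 := norm_ne_zero_iff.2 h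
      rw [show ‖a‖⁻¹ * ‖a‖⁻¹ * ‖a‖^2 = 1 by rw [sq]; field_simp]
      norm_cast
  have hθ2 : θ * star θ = 1 := by
    by_cases h : a = 0
    · simp [hθdef, h]
    · rw [hθdef, if_neg h, Quaternion.star_smul, star_star, smul_mul_assoc, mul_smul_comm,
        smul_smul, star_mul_self_q, Quaternion.smul_coe]
      have : ‖a‖ ≠ 0 := norm_ne_zero_iff.2 h
      rw [show ‖a‖⁻¹ * ‖a‖⁻¹ * ‖a‖^2 = 1 by rw [sq]; field_simp]
      norm_cast
  have hθa : θ * a = ((t:ℝ) : ℍ[ℝ]) := by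
    by_cases h : a = 0
    · rw [hθdef, htdef, if_pos h, h]
      simp
    · rw [hθdef, if_neg h, smul_mul_assoc, star_mul_self_q, Quaternion.smul_coe, htdef]
      congr 1
      have : ‖a‖ ≠ 0 := norm_ne_zero_iff.2 h
      field_simp
  set D : Matrix (Fin m) (Fin m) ℍ[ℝ] :=
    Matrix.diagonal (fun i => if i = i0 then θ else 1) with hDdef
  have hDstar : star D = Matrix.diagonal (fun i => star (if i = i0 then θ else 1)) := by
    rw [hDdef, Matrix.star_eq_conjTranspose, Matrix.diagonal_conjTranspose]
    rfl
  have hDu : D ∈ unitary (Matrix (Fin m) (Fin m) ℍ[ℝ]) := by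
    constructor
    · rw [hDstar, hDdef, Matrix.diagonal_mul_diagonal]
      rw [show (fun i => star (if i = i0 then θ else 1) * (if i = i0 then θ else 1))
          = fun _ : Fin m => (1:ℍ[ℝ]) by
        funext i; by_cases h : i = i0 <;> simp [h, hθ1]]
      exact Matrix.diagonal_one
    · rw [hDstar, hDdef, Matrix.diagonal_mul_diagonal]
      rw [show (fun i => (if i = i0 then θ else 1) * star (if i = i0 then θ else 1))
          = fun _ : Fin m => (1:ℍ[ℝ]) by
        funext i; by_cases h : i = i0 <;> simp [h, hθ2]]
      exact Matrix.diagonal_one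
  set u : Fin m → ℍ[ℝ] := D.mulVec w with hudef
  have hu : ∀ i, u i = (if i = i0 then θ else 1) * w i := by
    intro i
    rw [hudef, hDdef, Matrix.mulVec_diagonal]
  have hu0 : u i0 = ((t:ℝ) : ℍ[ℝ]) := by rw [hu i0, if_pos rfl, ← hadef, hθa]
  have hui : ∀ i, i ≠ i0 → u i = w i := by
    intro i hi; rw [hu i, if_neg hi, one_mul]
  have husum : ∑ j, ‖u j‖^2 = S := by
    rw [hSdef]
    refine Finset.sum_congr rfl fun j _ => ?_
    by_cases h : j = i0
    · rw [h, hu0, norm_coe_q t ht0, htdef, hadef]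
    · rw [hui j h]
  set c : Fin m → ℍ[ℝ] := fun i => if i = i0 then ((r:ℝ) : ℍ[ℝ]) else 0 with hcdef
  by_cases huc : u = c
  · exact ⟨D, hDu, huc⟩
  -- Householder step
  have htle : t ≤ r := by
    have h1 : t^2 ≤ S := by
      rw [← husum]
      have h1' : ‖u i0‖^2 ≤ ∑ j, ‖u j‖^2 :=
        Finset.single_le_sum (fun j _ => sq_nonneg ‖u j‖) (Finset.mem_univ i0)
      rwa [hu0, norm_coe_q t ht0] at h1'
    nlinarith
  have htlt : t < r := by
    rcases lt_or_eq_of_le htle with h | h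
    · exact h
    · exfalso
      apply huc
      have hsum0 : ∑ j ∈ Finset.univ.erase i0, ‖u j‖^2 = 0 := by
        have h2' : ‖u i0‖^2 + ∑ j ∈ Finset.univ.erase i0, ‖u j‖^2 = ∑ j, ‖u j‖^2 :=
          Finset.add_sum_erase Finset.univ (fun j => ‖u j‖^2) (Finset.mem_univ i0)
        rw [show ‖u i0‖^2 = t^2 by rw [hu0, norm_coe_q t ht0], husum] at h2'
        nlinarith
      funext i
      by_cases hi : i = i0
      · rw [hi, hu0, h]
        simp [hcdef]
      · have := (Finset.sum_eq_zero_iff_of_nonneg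
          (fun x _ => sq_nonneg (‖u x‖))).1 hsum0 i
          (Finset.mem_erase.2 ⟨hi, Finset.mem_univ _⟩)
        have hz : ‖u i‖ = 0 := by nlinarith [norm_nonneg (u i)]
        have : u i = 0 := by simpa using hz
        rw [this]
        simp [hcdef, hi]
  have hrpos : 0 < r := lt_of_le_of_lt ht0 htlt
  set ρ : ℝ := Real.sqrt (2*r*(r - t)) with hρdef
  have hρsq : ρ^2 = 2*r*(r-t) := Real.sq_sqrt (by nlinarith)
  have hρpos : 0 < ρ := Real.sqrt_pos.2 (by nlinarith)
  set p : Fin m → ℍ[ℝ] := fun i => (ρ⁻¹ : ℝ) • (u i - c i) with hpdef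
  -- basic sums
  have hsum1 : ∑ j, star (u j) * u j = ((S:ℝ) : ℍ[ℝ]) := by
    rw [← husum, coe_sum]
    exact Finset.sum_congr rfl fun j _ => star_mul_self_q (u j)
  have hc0 : c i0 = ((r:ℝ) : ℍ[ℝ]) := by simp [hcdef]
  have hsum2 : ∑ j, star (c j) * u j = ((r*t : ℝ) : ℍ[ℝ]) := by
    rw [Finset.sum_eq_single i0 (fun b _ hb => by simp [hcdef, hb]) (by simp)]
    rw [hc0, hu0, Quaternion.star_coe, Quaternion.coe_mul]
  have hsum3 : ∑ j, star (u j) * c j = ((t*r : ℝ) : ℍ[ℝ]) := by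
    rw [Finset.sum_eq_single i0 (fun b _ hb => by simp [hcdef, hb]) (by simp)]
    rw [hc0, hu0, Quaternion.star_coe, Quaternion.coe_mul]
  have hsum4 : ∑ j, star (c j) * c j = ((r*r : ℝ) : ℍ[ℝ]) := by
    rw [Finset.sum_eq_single i0 (fun b _ hb => by simp [hcdef, hb]) (by simp)]
    rw [hc0, Quaternion.star_coe, Quaternion.coe_mul]
  have hdiff : ∑ j, star (u j - c j) * (u j - c j) = ((ρ^2 : ℝ) : ℍ[ℝ]) := by
    have expand : ∀ j, star (u j - c j) * (u j - c j)
        = (star (u j) * u j - star (c j) * u j) - (star (u j) * c j - star (c j) * c j) := by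
      intro j
      rw [star_sub, sub_mul, mul_sub, mul_sub]
      abel
    rw [Finset.sum_congr rfl (fun j _ => expand j), Finset.sum_sub_distrib,
      Finset.sum_sub_distrib, Finset.sum_sub_distrib, hsum1, hsum2, hsum3, hsum4, hρsq]
    rw [show ((2*r*(r-t) : ℝ) : ℍ[ℝ]) = (((S - r*t) - (t*r - r*r) : ℝ) : ℍ[ℝ]) from
      congrArg _ (by rw [← hr2]; ring)]
    norm_cast
  have hp : ∑ j, star (p j) * p j = 1 := by
    have : ∀ j, star (p j) * p j = (ρ⁻¹ * ρ⁻¹) • (star (u j - c j) * (u j - c j)) := by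
      intro j
      rw [hpdef, Quaternion.star_smul, smul_mul_assoc, mul_smul_comm, smul_smul]
    rw [Finset.sum_congr rfl (fun j _ => this j), ← Finset.smul_sum, hdiff,
      Quaternion.smul_coe]
    rw [show ρ⁻¹ * ρ⁻¹ * ρ^2 = 1 by field_simp]
    norm_cast
  have hdot : ∑ j, star (p j) * u j = ((ρ⁻¹ * (S - r*t) : ℝ) : ℍ[ℝ]) := by
    have : ∀ j, star (p j) * u j = ρ⁻¹ • (star (u j) * u j - star (c j) * u j) := by
      intro j
      rw [hpdef, Quaternion.star_smul, smul_mul_assoc, star_sub, sub_mul]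
    rw [Finset.sum_congr rfl (fun j _ => this j), ← Finset.smul_sum,
      Finset.sum_sub_distrib, hsum1, hsum2]
    rw [show ((S:ℝ):ℍ[ℝ]) - ((r*t:ℝ):ℍ[ℝ]) = ((S - r*t : ℝ):ℍ[ℝ]) by push_cast; ring]
    rw [Quaternion.smul_coe]
  refine ⟨hh p * D, ?_, ?_⟩
  · have hhu : hh p ∈ unitary (Matrix (Fin m) (Fin m) ℍ[ℝ]) := by
      constructor
      · rw [hh_star p, hh_mul_self p hp]
      · rw [hh_star p, hh_mul_self p hp]
    exact mul_mem hhu hDu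
  · rw [← Matrix.mulVec_mulVec, ← hudef, hh_mulVec p u, hcdef]
    funext i
    rw [hdot, Quaternion.mul_coe_eq_smul, hpdef, smul_smul, smul_smul]
    rw [show (2:ℝ) * (ρ⁻¹ * (S - r*t)) * ρ⁻¹ = 1 by
      rw [← hr2]
      have : ρ^2 = 2*(r^2 - r*t) := by rw [hρsq]; ring
      have hρne : ρ ≠ 0 := ne_of_gt hρpos
      field_simp
      nlinarith [hρsq]]
    rw [one_smul]
    abel

lemma exists_unitary_mulVec_eq {m : ℕ} (hm : 0 < m) (w w' : Fin m → ℍ[ℝ])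
    (hww : ∑ j, ‖w j‖^2 = ∑ j, ‖w' j‖^2) :
    ∃ A ∈ unitary (Matrix (Fin m) (Fin m) ℍ[ℝ]), A.mulVec w = w' := by
  obtain ⟨A, hA, hAw⟩ := exists_unitary_mulVec_single hm w
  obtain ⟨B, hB, hBw⟩ := exists_unitary_mulVec_single hm w'
  refine ⟨star B * A, mul_mem (Unitary.star_mem hB) hA, ?_⟩
  rw [← Matrix.mulVec_mulVec, hAw, hww, ← hBw, Matrix.mulVec_mulVec,
    Unitary.star_mul_self_of_mem hB, Matrix.one_mulVec]

lemma exists_unit_quat_mul (a b : ℍ[ℝ]) (hab : ‖a‖ = ‖b‖) :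
    ∃ q : ℍ[ℝ], ‖q‖ = 1 ∧ q * a = b := by
  by_cases h : a = 0
  · refine ⟨1, norm_one, ?_⟩
    have hb : b = 0 := by rwa [h, norm_zero, eq_comm, norm_eq_zero] at hab
    rw [h, hb, mul_zero]
  · have ha : ‖a‖ ≠ 0 := norm_ne_zero_iff.2 h
    refine ⟨((‖a‖^2)⁻¹ : ℝ) • (b * star a), ?_, ?_⟩
    · rw [norm_smul, norm_mul, Quaternion.norm_star, ← hab, Real.norm_eq_abs,
        abs_of_nonneg (by positivity)]
      field_simp
    · rw [smul_mul_assoc, mul_assoc, star_mul_self_q a, Quaternion.mul_coe_eq_smul,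
        smul_smul, inv_mul_cancel₀ (by positivity), one_smul]
lemma inv_val {m : ℕ} (g : Sp m) : (g⁻¹ : Sp m).val = star g.val := by
  rw [← Unitary.star_eq_inv]; rfl

lemma mul_val {m : ℕ} (g k : Sp m) : (g * k : Sp m).val = g.val * k.val := rfl

lemma star_mul_self_val {m : ℕ} (g : Sp m) : star g.val * g.val = 1 :=
  Unitary.star_mul_self_of_mem g.prop

lemma mul_star_self_val {m : ℕ} (g : Sp m) : g.val * star g.val = 1 :=
  Unitary.mul_star_self_of_mem g.prop

lemma mem_Kset_of_col {n : ℕ} (k : Sp (n+1))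
    (hcol : ∀ i : Fin (n+1), (i:ℕ) < n → k.val i (Fin.last n) = 0) : k ∈ Kset n := by
  have h1 : ‖k.val (Fin.last n) (Fin.last n)‖ = 1 := by
    refine col_norm_one_of_single (star_mul_self_val k) _ _ (fun i hi => hcol i ?_)
    have h2 : (i:ℕ) < n + 1 := i.isLt
    have h3 : (i:ℕ) ≠ n := fun h => hi (Fin.ext (by simp [h]))
    omega
  intro i j hij
  rcases hij with ⟨hi, hj⟩ | ⟨hi, hj⟩
  · have : j = Fin.last n := Fin.ext (by simp [hj])
    rw [this]; exact hcol i hi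
  · have hi' : i = Fin.last n := Fin.ext (by simp [hi])
    rw [hi']
    refine row_entries_zero (mul_star_self_val k) (Fin.last n) (Fin.last n) h1 j ?_
    intro h
    rw [h] at hj
    simp at hj

lemma K_corner {n : ℕ} {k : Sp (n+1)} (hk : k ∈ Kset n) :
    ‖k.val (Fin.last n) (Fin.last n)‖ = 1 := by
  refine col_norm_one_of_single (star_mul_self_val k) _ _ (fun i hi => ?_)
  refine hk i (Fin.last n) (Or.inl ⟨?_, by simp⟩)
  have h2 : (i:ℕ) < n + 1 := i.isLt
  have h3 : (i:ℕ) ≠ n := fun h => hi (Fin.ext (by simp [h]))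
  omega


lemma re_star_mul_self (a : ℍ[ℝ]) : (star a * a).re = ‖a‖^2 := by
  rw [star_mul_self_q, Quaternion.re_coe]

set_option maxHeartbeats 1000000 in
lemma invariants_of_rel {n : ℕ} (hn : 2 ≤ n) (x y k h : Sp (n+1)) (hk : k ∈ Kset n)
    (hN : h ∈ Nset n) (hy : y = h * x * k⁻¹) :
    normV0 y = normV0 x ∧
      ‖v y ⟨n-1, Nat.lt_of_le_of_lt (Nat.sub_le n 1) (Nat.lt_succ_self n)⟩‖ = ‖v x ⟨n-1, Nat.lt_of_le_of_lt (Nat.sub_le n 1) (Nat.lt_succ_self n)⟩‖ ∧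
      ‖v y (Fin.last n)‖ = ‖v x (Fin.last n)‖ := by
  have hq1 : ‖star (k.val (Fin.last n) (Fin.last n))‖ = 1 := by
    rw [Quaternion.norm_star]; exact K_corner hk
  have hyval : y.val = h.val * x.val * star k.val := by
    rw [hy, mul_val, mul_val, inv_val]
  have hvy : ∀ i, v y i = (∑ j, h.val i j * v x j) * star (k.val (Fin.last n) (Fin.last n)) := by
    intro i
    show y.val i (Fin.last n) = _
    rw [hyval, Matrix.mul_apply]
    have hsingle : ∑ j', (h.val * x.val) i j' * (star k.val) j' (Fin.last n)
        = (h.val * x.val) i (Fin.last n) * (star k.val) (Fin.last n) (Fin.last n) := by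
      refine Finset.sum_eq_single _ (fun b _ hb => ?_) (fun hm => absurd (Finset.mem_univ _) hm)
      have hbn : (b:ℕ) < n := by
        have h1 := b.isLt
        have h2 : (b:ℕ) ≠ n := fun hbe => hb (Fin.ext (by simp [hbe]))
        omega
      rw [Matrix.star_apply, hk (Fin.last n) b (Or.inr ⟨by simp, hbn⟩), star_zero, mul_zero]
    rw [hsingle, Matrix.star_apply, Matrix.mul_apply]
    rfl
  have hnvy : ∀ i, ‖v y i‖ = ‖∑ j, h.val i j * v x j‖ := by
    intro i
    rw [hvy i, norm_mul, hq1, mul_one]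
  have hDiagNorm : ∀ i0 : Fin (n+1), n-1 ≤ (i0:ℕ) → ‖v y i0‖ = ‖v x i0‖ := by
    intro i0 hi0
    have hzero : ∀ b : Fin (n+1), b ≠ i0 → h.val i0 b = 0 := by
      intro b hb
      refine hN i0 b ?_
      rintro (⟨h1, h2⟩ | ⟨h1, h2⟩)
      · omega
      · exact hb h1.symm
    have hzero' : ∀ b : Fin (n+1), b ≠ i0 → h.val b i0 = 0 := by
      intro b hb
      refine hN b i0 ?_
      rintro (⟨h1, h2⟩ | ⟨h1, h2⟩)
      · omega
      · exact hb h1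
    have hnorm1 : ‖h.val i0 i0‖ = 1 := col_norm_one_of_single (star_mul_self_val h) i0 i0 hzero'
    have hws : ∑ j, h.val i0 j * v x j = h.val i0 i0 * v x i0 :=
      Finset.sum_eq_single i0 (fun b _ hb => by rw [hzero b hb, zero_mul])
        (fun hm => absurd (Finset.mem_univ _) hm)
    rw [hnvy, hws, norm_mul, hnorm1, one_mul]
  refine ⟨?_, hDiagNorm _ (by simp), hDiagNorm _ (by simp)⟩
  -- normV0 part
  have hι : ∀ i : Fin (n-1), ((Fin.castLE (by omega : n-1 ≤ n+1) i : Fin (n+1)) : ℕ) = (i:ℕ) :=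
    fun i => rfl
  have hTval : ∀ j j' : Fin (n+1),
      (∑ i : Fin (n-1), star (h.val (Fin.castLE (by omega) i) j) * h.val (Fin.castLE (by omega) i) j')
      = if j = j' ∧ (j:ℕ) < n-1 then 1 else 0 := by
    intro j j'
    by_cases hj : (j:ℕ) < n-1
    · by_cases hj' : (j':ℕ) < n-1
      · have hfull : ∑ i : Fin (n+1), star (h.val i j) * h.val i j'
            = ∑ i : Fin (n-1), star (h.val (Fin.castLE (by omega) i) j)
                * h.val (Fin.castLE (by omega) i) j' := by
          refine sum_castLE (by omega) _ (fun i hi => ?_)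
          have : h.val i j = 0 := by
            refine hN i j ?_
            rintro (⟨h1, h2⟩ | ⟨h1, h2⟩)
            · omega
            · have := congrArg Fin.val h1
              omega
          rw [this, star_zero, zero_mul]
        rw [← hfull, entry_star_mul (star_mul_self_val h) j j']
        by_cases e : j = j'
        · simp [e, hj']
        · simp [e]
      · have hz : (∑ i : Fin (n-1), star (h.val (Fin.castLE (by omega) i) j)
            * h.val (Fin.castLE (by omega) i) j') = 0 := by
          refine Finset.sum_eq_zero fun i _ => ?_
          have : h.val (Fin.castLE (by omega) i) j' = 0 := by
            refine hN _ j' ?_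
            rintro (⟨h1, h2⟩ | ⟨h1, h2⟩)
            · omega
            · have h3 := congrArg Fin.val h1
              rw [hι] at h3
              have := i.isLt
              omega
          rw [this, mul_zero]
        rw [hz, if_neg]
        rintro ⟨e1, e2⟩
        rw [e1] at e2
        omega
    · have hz : (∑ i : Fin (n-1), star (h.val (Fin.castLE (by omega) i) j)
          * h.val (Fin.castLE (by omega) i) j') = 0 := by
        refine Finset.sum_eq_zero fun i _ => ?_
        have : h.val (Fin.castLE (by omega) i) j = 0 := by
          refine hN _ j ?_
          rintro (⟨h1, h2⟩ | ⟨h1, h2⟩)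
          · omega
          · have h3 := congrArg Fin.val h1
            rw [hι] at h3
            have := i.isLt
            omega
        rw [this, star_zero, zero_mul]
      rw [hz, if_neg]
      rintro ⟨e1, e2⟩
      omega
  have hkey2 : ∑ i : Fin (n-1),
        star (∑ j, h.val (Fin.castLE (by omega) i) j * v x j)
          * (∑ j, h.val (Fin.castLE (by omega) i) j * v x j)
      = ∑ i : Fin (n-1), star (v x (Fin.castLE (by omega) i)) * v x (Fin.castLE (by omega) i) := by
    have hexp : ∀ i : Fin (n-1),
        star (∑ j, h.val (Fin.castLE (by omega : n-1 ≤ n+1) i) j * v x j)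
          * (∑ j, h.val (Fin.castLE (by omega) i) j * v x j)
        = ∑ j, ∑ j', star (v x j) *
            ((star (h.val (Fin.castLE (by omega) i) j) * h.val (Fin.castLE (by omega) i) j') * v x j') := by
      intro i
      rw [star_sum, Finset.sum_mul_sum]
      refine Finset.sum_congr rfl fun j _ => Finset.sum_congr rfl fun j' _ => ?_
      rw [StarMul.star_mul, mul_assoc, ← mul_assoc (star (h.val (Fin.castLE (by omega) i) j))]
    calc ∑ i : Fin (n-1), star (∑ j, h.val (Fin.castLE (by omega) i) j * v x j)
          * (∑ j, h.val (Fin.castLE (by omega) i) j * v x j)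
        = ∑ i : Fin (n-1), ∑ j, ∑ j', star (v x j) *
            ((star (h.val (Fin.castLE (by omega) i) j) * h.val (Fin.castLE (by omega) i) j') * v x j') :=
          Finset.sum_congr rfl fun i _ => hexp i
      _ = ∑ j, ∑ j', star (v x j) *
            ((∑ i : Fin (n-1), star (h.val (Fin.castLE (by omega) i) j)
              * h.val (Fin.castLE (by omega) i) j') * v x j') := by
          rw [Finset.sum_comm]
          refine Finset.sum_congr rfl fun j _ => ?_
          rw [Finset.sum_comm]
          refine Finset.sum_congr rfl fun j' _ => ?_
          rw [← Finset.mul_sum, ← Finset.sum_mul]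
      _ = ∑ j : Fin (n+1), if (j:ℕ) < n-1 then star (v x j) * v x j else 0 := by
          refine Finset.sum_congr rfl fun j _ => ?_
          rw [Finset.sum_eq_single j (fun b _ hb => by
              rw [hTval j b, if_neg (by rintro ⟨e, _⟩; exact hb e.symm), zero_mul, mul_zero])
            (fun hm => absurd (Finset.mem_univ _) hm)]
          rw [hTval j j]
          by_cases hj : (j:ℕ) < n-1
          · rw [if_pos ⟨rfl, hj⟩, if_pos hj, one_mul]
          · rw [if_neg (by rintro ⟨_, e⟩; exact hj e), if_neg hj, zero_mul, mul_zero]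
      _ = ∑ i : Fin (n-1), star (v x (Fin.castLE (by omega) i)) * v x (Fin.castLE (by omega) i) := by
          rw [sum_castLE (by omega : n-1 ≤ n+1) _ (fun j hj => by rw [if_neg (by omega)])]
          refine Finset.sum_congr rfl fun i _ => ?_
          rw [if_pos (by simpa using i.isLt)]
  have hre := congrArg QuaternionAlgebra.re hkey2
  rw [re_sum, re_sum] at hre
  have hre2 : ∑ i : Fin (n-1), ‖∑ j, h.val (Fin.castLE (by omega : n-1 ≤ n+1) i) j * v x j‖^2
      = ∑ i : Fin (n-1), ‖v x (Fin.castLE (by omega : n-1 ≤ n+1) i)‖^2 := by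
    calc ∑ i : Fin (n-1), ‖∑ j, h.val (Fin.castLE (by omega : n-1 ≤ n+1) i) j * v x j‖^2
        = ∑ i : Fin (n-1),
            (star (∑ j, h.val (Fin.castLE (by omega : n-1 ≤ n+1) i) j * v x j)
              * (∑ j, h.val (Fin.castLE (by omega) i) j * v x j)).re :=
          Finset.sum_congr rfl fun i _ => (re_star_mul_self _).symm
      _ = ∑ i : Fin (n-1),
            (star (v x (Fin.castLE (by omega : n-1 ≤ n+1) i))
              * v x (Fin.castLE (by omega) i)).re := hre
      _ = ∑ i : Fin (n-1), ‖v x (Fin.castLE (by omega : n-1 ≤ n+1) i)‖^2 :=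
          Finset.sum_congr rfl fun i _ => re_star_mul_self _
  show Real.sqrt _ = Real.sqrt _
  congr 1
  rw [← hre2]
  exact Finset.sum_congr rfl fun i _ => by rw [hnvy]

def blockN (n : ℕ) (A : Matrix (Fin (n-1)) (Fin (n-1)) ℍ[ℝ]) (q₁ q₂ : ℍ[ℝ]) :
    Matrix (Fin (n+1)) (Fin (n+1)) ℍ[ℝ] :=
  Matrix.of fun i j =>
    if hij : (i:ℕ) < n-1 ∧ (j:ℕ) < n-1 then A ⟨i, hij.1⟩ ⟨j, hij.2⟩
    else if i = j then (if (i:ℕ) = n-1 then q₁ else q₂) else 0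

variable {n : ℕ} {A : Matrix (Fin (n-1)) (Fin (n-1)) ℍ[ℝ]} {q₁ q₂ : ℍ[ℝ]}

lemma blockN_apply_lt {k j : Fin (n+1)} (hk : (k:ℕ) < n-1) (hj : (j:ℕ) < n-1) :
    blockN n A q₁ q₂ k j = A ⟨k, hk⟩ ⟨j, hj⟩ := by
  simp only [blockN, Matrix.of_apply]
  rw [dif_pos ⟨hk, hj⟩]

lemma blockN_apply_zero {k j : Fin (n+1)} (hk : ¬((k:ℕ) < n-1 ∧ (j:ℕ) < n-1)) (hkj : k ≠ j) :
    blockN n A q₁ q₂ k j = 0 := by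
  simp only [blockN, Matrix.of_apply]
  rw [dif_neg hk, if_neg hkj]

lemma blockN_apply_diag {k : Fin (n+1)} (hk : ¬((k:ℕ) < n-1)) :
    blockN n A q₁ q₂ k k = if (k:ℕ) = n-1 then q₁ else q₂ := by
  simp only [blockN, Matrix.of_apply]
  rw [dif_neg (fun c => hk c.1)]
  simp

lemma blockN_star :
    star (blockN n A q₁ q₂) = blockN n (star A) (star q₁) (star q₂) := by
  rw [← Matrix.ext_iff]
  intro i j
  rw [Matrix.star_apply]
  rcases eq_or_ne j i with rfl | hne
  · by_cases h1 : (j:ℕ) < n-1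
    · rw [blockN_apply_lt h1 h1, blockN_apply_lt h1 h1, Matrix.star_apply]
    · rw [blockN_apply_diag h1, blockN_apply_diag h1, apply_ite star]
  · by_cases h1 : (j:ℕ) < n-1 ∧ (i:ℕ) < n-1
    · rw [blockN_apply_lt h1.1 h1.2, blockN_apply_lt h1.2 h1.1, Matrix.star_apply]
    · rw [blockN_apply_zero h1 hne, blockN_apply_zero (fun c => h1 ⟨c.2, c.1⟩) (fun e => hne e.symm),
        star_zero]

lemma blockN_star_mul_self (hn : 2 ≤ n) (hA : star A * A = 1) (h1 : ‖q₁‖ = 1) (h2 : ‖q₂‖ = 1) :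
    star (blockN n A q₁ q₂) * blockN n A q₁ q₂ = 1 := by
  rw [← Matrix.ext_iff]
  intro j j'
  rw [Matrix.mul_apply, Matrix.one_apply]
  have hterm : ∀ k, (star (blockN n A q₁ q₂)) j k * blockN n A q₁ q₂ k j'
      = star (blockN n A q₁ q₂ k j) * blockN n A q₁ q₂ k j' :=
    fun k => by rw [Matrix.star_apply]
  rw [Finset.sum_congr rfl fun k _ => hterm k]
  by_cases hj : (j:ℕ) < n-1
  · by_cases hj' : (j':ℕ) < n-1
    · have hcast : ∑ k : Fin (n+1), star (blockN n A q₁ q₂ k j) * blockN n A q₁ q₂ k j'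
          = ∑ k : Fin (n-1), star (blockN n A q₁ q₂ (Fin.castLE (by omega) k) j)
              * blockN n A q₁ q₂ (Fin.castLE (by omega) k) j' := by
        refine sum_castLE (by omega) _ (fun k hk => ?_)
        rw [blockN_apply_zero (fun c => by omega)
          (fun e => by have := congrArg Fin.val e; omega), star_zero, zero_mul]
      rw [hcast]
      have hAe : ∑ k : Fin (n-1), star (blockN n A q₁ q₂ (Fin.castLE (by omega) k) j)
            * blockN n A q₁ q₂ (Fin.castLE (by omega) k) j'
          = ∑ k : Fin (n-1), star (A k ⟨j, hj⟩) * A k ⟨j', hj'⟩ := by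
        refine Finset.sum_congr rfl fun k _ => ?_
        rw [blockN_apply_lt (by simpa using k.isLt) hj, blockN_apply_lt (by simpa using k.isLt) hj']
        rfl
      rw [hAe, entry_star_mul hA ⟨j, hj⟩ ⟨j', hj'⟩]
      by_cases e : j = j'
      · have hmk : (⟨(j:ℕ), hj⟩ : Fin (n-1)) = ⟨(j':ℕ), hj'⟩ := by
          simp only [Fin.mk.injEq]
          exact congrArg Fin.val e
        rw [if_pos hmk, if_pos e]
      · have hmk : (⟨(j:ℕ), hj⟩ : Fin (n-1)) ≠ ⟨(j':ℕ), hj'⟩ := by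
          simp only [ne_eq, Fin.mk.injEq]
          exact fun c => e (Fin.ext c)
        rw [if_neg hmk, if_neg e]
    · rw [Finset.sum_eq_zero, if_neg (fun e => by have := congrArg Fin.val e; omega)]
      intro k _
      by_cases hk : (k:ℕ) < n-1
      · rw [blockN_apply_zero (fun c => hj' c.2)
          (fun e => by have := congrArg Fin.val e; omega), mul_zero]
      · rw [blockN_apply_zero (fun c => hk c.1)
          (fun e => by have := congrArg Fin.val e; omega), star_zero, zero_mul]
  · rcases eq_or_ne j j' with rfl | hne
    · rw [Finset.sum_eq_single j (fun b _ hb => by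
          rw [blockN_apply_zero (fun c => hj c.2) hb, star_zero, zero_mul])
        (fun hm => absurd (Finset.mem_univ _) hm), if_pos rfl]
      rw [blockN_apply_diag hj]
      by_cases hj1 : (j:ℕ) = n-1
      · rw [if_pos hj1, star_mul_self_q, h1]
        norm_num
      · rw [if_neg hj1, star_mul_self_q, h2]
        norm_num
    · rw [Finset.sum_eq_zero, if_neg hne]
      intro k _
      by_cases hk : k = j
      · rw [hk, blockN_apply_zero (fun c => hj c.1) hne, mul_zero]
      · rw [blockN_apply_zero (fun c => hj c.2) hk, star_zero, zero_mul]

lemma blockN_unitary (hn : 2 ≤ n) (hA : A ∈ unitary (Matrix (Fin (n-1)) (Fin (n-1)) ℍ[ℝ]))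
    (h1 : ‖q₁‖ = 1) (h2 : ‖q₂‖ = 1) :
    blockN n A q₁ q₂ ∈ unitary (Matrix (Fin (n+1)) (Fin (n+1)) ℍ[ℝ]) := by
  constructor
  · exact blockN_star_mul_self hn (Unitary.star_mul_self_of_mem hA) h1 h2
  · have hs := blockN_star_mul_self hn (A := star A) (q₁ := star q₁) (q₂ := star q₂)
      (by rw [star_star]; exact Unitary.mul_star_self_of_mem hA)
      (by rwa [Quaternion.norm_star]) (by rwa [Quaternion.norm_star])
    rw [← blockN_star, star_star] at hs
    exact hs

set_option maxHeartbeats 1000000 in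
lemma rel_of_invariants {n : ℕ} (hn : 2 ≤ n) (x y : Sp (n+1))
    (e1 : normV0 x = normV0 y)
    (e2 : ‖v x ⟨n-1, Nat.lt_of_le_of_lt (Nat.sub_le n 1) (Nat.lt_succ_self n)⟩‖ = ‖v y ⟨n-1, Nat.lt_of_le_of_lt (Nat.sub_le n 1) (Nat.lt_succ_self n)⟩‖)
    (e3 : ‖v x (Fin.last n)‖ = ‖v y (Fin.last n)‖) :
    ∃ h k : Sp (n+1), h ∈ Nset n ∧ k ∈ Kset n ∧ y = h * x * k⁻¹ := by
  have hsum : ∑ i : Fin (n-1), ‖v x (Fin.castLE (by omega : n-1 ≤ n+1) i)‖^2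
      = ∑ i : Fin (n-1), ‖v y (Fin.castLE (by omega : n-1 ≤ n+1) i)‖^2 := by
    have h1 := congrArg (fun t => t^2) e1
    simp only [normV0] at h1
    rwa [Real.sq_sqrt (Finset.sum_nonneg fun i _ => sq_nonneg _),
      Real.sq_sqrt (Finset.sum_nonneg fun i _ => sq_nonneg _)] at h1
  obtain ⟨A, hA, hAw⟩ := exists_unitary_mulVec_eq (m := n-1) (by omega)
    (fun i => v x (Fin.castLE (by omega) i)) (fun i => v y (Fin.castLE (by omega) i)) hsum
  obtain ⟨q₁, hq₁, hq₁a⟩ := exists_unit_quat_mul _ _ e2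
  obtain ⟨q₂, hq₂, hq₂a⟩ := exists_unit_quat_mul _ _ e3
  have hBu : blockN n A q₁ q₂ ∈ unitary (Matrix (Fin (n+1)) (Fin (n+1)) ℍ[ℝ]) :=
    blockN_unitary hn hA hq₁ hq₂
  set h : Sp (n+1) := ⟨blockN n A q₁ q₂, hBu⟩ with hhdef
  have hNmem : h ∈ Nset n := by
    intro i j hij
    rw [not_or] at hij
    obtain ⟨hc1, hc2⟩ := hij
    by_cases e : i = j
    · exfalso
      apply hc2
      refine ⟨e, ?_⟩
      by_contra hlt
      push_neg at hlt
      exact hc1 ⟨hlt, by have := congrArg Fin.val e; omega⟩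
    · exact blockN_apply_zero hc1 e
  have hval : h.val = blockN n A q₁ q₂ := rfl
  have hmv : ∀ i : Fin (n+1), ∑ l, h.val i l * v x l = v y i := by
    intro i
    by_cases hi : (i:ℕ) < n-1
    · have hcast : ∑ l : Fin (n+1), h.val i l * v x l
          = ∑ l : Fin (n-1), h.val i (Fin.castLE (by omega) l) * v x (Fin.castLE (by omega) l) := by
        refine sum_castLE (by omega) _ (fun l hl => ?_)
        rw [hval, blockN_apply_zero (fun c => absurd c.2 (by omega))
          (fun e => by have := congrArg Fin.val e; omega), zero_mul]
      rw [hcast]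
      have hstep : ∀ l : Fin (n-1), h.val i (Fin.castLE (by omega : n-1 ≤ n+1) l)
          * v x (Fin.castLE (by omega) l)
          = A ⟨(i:ℕ), hi⟩ l * v x (Fin.castLE (by omega) l) := by
        intro l
        rw [hval, blockN_apply_lt hi (by simpa using l.isLt)]
        rfl
      rw [Finset.sum_congr rfl fun l _ => hstep l]
      have hAv := congrFun hAw ⟨(i:ℕ), hi⟩
      simp only [Matrix.mulVec, dotProduct] at hAv
      have hvyi : v y (Fin.castLE (by omega : n-1 ≤ n+1) ⟨(i:ℕ), hi⟩) = v y i := rfl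
      rw [← hvyi]
      exact hAv
    · have hdiag : ∀ l : Fin (n+1), l ≠ i → h.val i l = 0 := fun l hl =>
        blockN_apply_zero (fun c => hi c.1) (fun e => hl e.symm)
      rw [Finset.sum_eq_single i (fun b _ hb => by rw [hdiag b hb, zero_mul])
        (fun hm => absurd (Finset.mem_univ _) hm)]
      have hdv : h.val i i = if (i:ℕ) = n-1 then q₁ else q₂ := blockN_apply_diag hi
      rw [hdv]
      by_cases hi1 : (i:ℕ) = n-1
      · rw [if_pos hi1]
        have hieq : i = ⟨n-1, by omega⟩ := Fin.ext (by simpa using hi1)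
        rw [hieq]
        exact hq₁a
      · rw [if_neg hi1]
        have hieq : i = Fin.last n := Fin.ext (by have := i.isLt; simp; omega)
        rw [hieq]
        exact hq₂a
  refine ⟨h, y⁻¹ * (h * x), hNmem, ?_, by group⟩
  apply mem_Kset_of_col
  intro i hi
  have hkval : (y⁻¹ * (h * x)).val = star y.val * (h.val * x.val) := by
    rw [mul_val, inv_val, mul_val]
  have hcol : (y⁻¹ * (h * x)).val i (Fin.last n) = (star y.val * y.val) i (Fin.last n) := by
    rw [hkval, Matrix.mul_apply, Matrix.mul_apply]
    refine Finset.sum_congr rfl fun j _ => ?_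
    congr 1
    rw [Matrix.mul_apply]
    exact hmv j
  rw [hcol, star_mul_self_val y, Matrix.one_apply,
    if_neg (fun e => by have := congrArg Fin.val e; simp at this; omega)]

end SpAux

open SpAux in
/-- Proposition 2.5: `(g₁, g₂)` and `(h₁, h₂)` lie in the same orbit of the
`G × K × N` action `(g, k, h) · (g₁, g₂) = (g g₁ k⁻¹, g g₂ h⁻¹)` on `G × G` iff the
invariants `‖v₀(g₂⁻¹ g₁)‖`, `|vₙ(g₂⁻¹ g₁)|`, `|vₙ₊₁(g₂⁻¹ g₁)|` agree. -/
theorem statement0 (n : ℕ) (hn : 2 ≤ n) (g₁ g₂ h₁ h₂ : Sp (n + 1)) :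
    (∃ g : Sp (n + 1), ∃ k ∈ Kset n, ∃ h ∈ Nset n,
        h₁ = g * g₁ * k⁻¹ ∧ h₂ = g * g₂ * h⁻¹) ↔
      (normV0 (g₂⁻¹ * g₁) = normV0 (h₂⁻¹ * h₁) ∧
        ‖v (g₂⁻¹ * g₁) ⟨n - 1, by omega⟩‖ = ‖v (h₂⁻¹ * h₁) ⟨n - 1, by omega⟩‖ ∧
        ‖v (g₂⁻¹ * g₁) (Fin.last n)‖ = ‖v (h₂⁻¹ * h₁) (Fin.last n)‖) := by
  constructor
  · rintro ⟨g, k, hk, h, hNh, he1, he2⟩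
    have hrel : h₂⁻¹ * h₁ = h * (g₂⁻¹ * g₁) * k⁻¹ := by
      rw [he1, he2]; group
    obtain ⟨a1, a2, a3⟩ := invariants_of_rel hn (g₂⁻¹ * g₁) (h₂⁻¹ * h₁) k h hk hNh hrel
    exact ⟨a1.symm, a2.symm, a3.symm⟩
  · rintro ⟨a1, a2, a3⟩
    obtain ⟨h, k, hNh, hk, hrel⟩ := rel_of_invariants hn (g₂⁻¹ * g₁) (h₂⁻¹ * h₁) a1 a2 a3
    refine ⟨h₂ * h * g₂⁻¹, k, hk, h, hNh, ?_, by group⟩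
    have hg : h₂ * (h * (g₂⁻¹ * g₁) * k⁻¹) = h₂ * h * g₂⁻¹ * g₁ * k⁻¹ := by group
    rw [← hg, ← hrel]
    group
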